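/- The entropy rate of the neutral Moran process with boundary mutations and fixed μ tends to 0 as N → ∞. -/

import Mathlib

open Finset

/-- Stationary distribution of the neutral boundary-mutation Moran process,
written with the harmonic number h_{N-1} = Σ_{k=1}^{N-1} 1/k. -/
noncomputable def moranBoundaryStatH (N : ℕ) (μ : ℝ) (j : ℕ) : ℝ :=
  if j = 0 ∨ j = N then
    (2 + 2 * μ * (N : ℝ) * ∑ k ∈ Ico 1 N, (1 : ℝ) / (k : ℝ))⁻¹
  else
    (2 + 2 * μ * (N : ℝ) * ∑ k ∈ Ico 1 N, (1 : ℝ) / (k : ℝ))⁻¹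
      * (μ * (N : ℝ) ^ 2 / ((j : ℝ) * ((N : ℝ) - j)))

/-- Shannon entropy of the transition row at state i of the neutral boundary-mutation
Moran process. -/
noncomputable def moranBoundaryRowEntropy (N : ℕ) (μ : ℝ) (i : ℕ) : ℝ :=
  if i = 0 ∨ i = N then -(μ * Real.log μ + (1 - μ) * Real.log (1 - μ))
  else
    -( 2 * ((i : ℝ) * ((N : ℝ) - i) / (N : ℝ) ^ 2
          * Real.log ((i : ℝ) * ((N : ℝ) - i) / (N : ℝ) ^ 2))
      + (1 - 2 * (i : ℝ) * ((N : ℝ) - i) / (N : ℝ) ^ 2)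
          * Real.log (1 - 2 * (i : ℝ) * ((N : ℝ) - i) / (N : ℝ) ^ 2) )



-- -x log x ≤ 1 - x for 0 < x
lemma neg_mul_log_le (x : ℝ) (hx : 0 < x) : -(x * Real.log x) ≤ 1 - x := by
  have h := Real.log_le_sub_one_of_pos (show (0:ℝ) < x⁻¹ by positivity)
  rw [Real.log_inv] at h
  have : x * (-Real.log x) ≤ x * (x⁻¹ - 1) := mul_le_mul_of_nonneg_left h hx.le
  have hxx : x * (x⁻¹ - 1) = 1 - x := by field_simp
  nlinarith

-- entropy of (q,q,1-2q) bound
lemma entropy_piece (q : ℝ) (hq0 : 0 < q) (hq : q ≤ 1/4) :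
    -(2 * (q * Real.log q) + (1 - 2*q) * Real.log (1 - 2*q))
      ≤ q * (2 * Real.log q⁻¹ + 2) := by
  have ht : (0:ℝ) < 1 - 2*q := by linarith
  have h1 : -((1-2*q) * Real.log (1-2*q)) ≤ 1 - (1-2*q) := neg_mul_log_le _ ht
  have h2 : Real.log q⁻¹ = -Real.log q := Real.log_inv q
  nlinarith

lemma entropy_piece_nonneg (q : ℝ) (hq0 : 0 < q) (hq : q ≤ 1/4) :
    0 ≤ -(2 * (q * Real.log q) + (1 - 2*q) * Real.log (1 - 2*q)) := by
  have hlq : Real.log q ≤ 0 := Real.log_nonpos hq0.le (by linarith)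
  have ht : (0:ℝ) < 1 - 2*q := by linarith
  have hlt : Real.log (1 - 2*q) ≤ 0 := Real.log_nonpos ht.le (by linarith)
  nlinarith

section
variable {μ : ℝ} (hμ0 : 0 < μ) (hμ1 : μ < 1)

lemma denom_pos (N : ℕ) (hμ0 : 0 < μ) :
    0 < 2 + 2 * μ * (N : ℝ) * ∑ k ∈ Ico 1 N, (1 : ℝ) / (k : ℝ) := by
  have hs : 0 ≤ ∑ k ∈ Ico 1 N, (1 : ℝ) / (k : ℝ) :=
    Finset.sum_nonneg fun k _ => by positivity
  positivity

lemma s0_nonneg (N : ℕ) (hμ0 : 0 < μ) : 0 ≤ moranBoundaryStatH N μ 0 := by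
  rw [moranBoundaryStatH, if_pos (Or.inl rfl)]
  exact inv_nonneg.2 (denom_pos N hμ0).le

lemma a_pos {N i : ℕ} (h1 : 1 ≤ i) (h2 : i < N) : 0 < (i:ℝ) * ((N:ℝ) - i) := by
  have hi : (1:ℝ) ≤ i := by exact_mod_cast h1
  have hN : (i:ℝ) < N := by exact_mod_cast h2
  nlinarith

lemma a_le {N i : ℕ} (h2 : i < N) : (i:ℝ) * ((N:ℝ) - i) ≤ (N:ℝ)^2 / 4 := by
  nlinarith [sq_nonneg ((i:ℝ) - ((N:ℝ) - i))]

-- nonnegativity of each summand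
lemma term_nonneg (hμ0 : 0 < μ) (hμ1 : μ < 1) (N i : ℕ) (hi : i ≤ N) :
    0 ≤ moranBoundaryStatH N μ i * moranBoundaryRowEntropy N μ i := by
  by_cases hb : i = 0 ∨ i = N
  · rw [moranBoundaryStatH, if_pos hb, moranBoundaryRowEntropy, if_pos hb]
    have h1 : Real.log μ ≤ 0 := Real.log_nonpos hμ0.le hμ1.le
    have h2 : Real.log (1-μ) ≤ 0 := Real.log_nonpos (by linarith) (by linarith)
    have hent : 0 ≤ -(μ * Real.log μ + (1 - μ) * Real.log (1 - μ)) := by nlinarith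
    exact mul_nonneg (inv_nonneg.2 (denom_pos N hμ0).le) hent
  · push_neg at hb
    have h1 : 1 ≤ i := by omega
    have h2 : i < N := by omega
    rw [moranBoundaryStatH, if_neg (by tauto), moranBoundaryRowEntropy, if_neg (by tauto)]
    have ha := a_pos h1 h2
    have hN : (0:ℝ) < (N:ℝ) := by exact_mod_cast (by omega : 0 < N)
    set q : ℝ := (i:ℝ) * ((N:ℝ) - i) / (N:ℝ)^2 with hq
    have hq0 : 0 < q := div_pos ha (by positivity)
    have hq4 : q ≤ 1/4 := by
      rw [hq, div_le_div_iff₀ (by positivity) (by norm_num)]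
      nlinarith [a_le h2]
    have hrow : 0 ≤ -(2 * (q * Real.log q)
        + (1 - 2*q) * Real.log (1 - 2*q)) := entropy_piece_nonneg q hq0 hq4
    have hrw : (1 - 2 * (i:ℝ) * ((N:ℝ) - i) / (N:ℝ)^2) = 1 - 2*q := by
      rw [hq]; ring
    rw [hrw]
    refine mul_nonneg (mul_nonneg (inv_nonneg.2 (denom_pos N hμ0).le) (by positivity)) ?_
    exact hrow

end

lemma log_le_harmonic : ∀ N : ℕ, 1 ≤ N →
    Real.log N ≤ ∑ k ∈ Ico 1 N, (1:ℝ)/k := by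
  intro N
  induction N with
  | zero => omega
  | succ n ih =>
    intro _
    rcases Nat.lt_or_ge n 1 with h1 | h1
    · interval_cases n <;> simp
    · have ihn := ih h1
      rw [Finset.sum_Ico_succ_top h1]
      have hpos : (0:ℝ) < n := by exact_mod_cast h1
      have key : Real.log ((n:ℝ)+1) - Real.log n ≤ 1/n := by
        rw [← Real.log_div (by positivity) (by positivity)]
        have h2 := Real.log_le_sub_one_of_pos (show (0:ℝ) < ((n:ℝ)+1)/n by positivity)
        have : ((n:ℝ)+1)/n - 1 = 1/n := by field_simp; ring
        linarith
      push_cast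
      linarith

lemma stirling_lb : ∀ M : ℕ, 1 ≤ M →
    (M:ℝ) * Real.log M - M + 1 ≤ ∑ i ∈ Ico 1 (M+1), Real.log i := by
  intro M
  induction M with
  | zero => omega
  | succ m ih =>
    intro _
    rcases Nat.lt_or_ge m 1 with h1 | h1
    · interval_cases m
      simp
    · have ihm := ih h1
      rw [Finset.sum_Ico_succ_top (by omega)]
      have hpos : (0:ℝ) < m := by exact_mod_cast h1
      have key : Real.log ((m:ℝ)+1) - Real.log m ≤ 1/m := by
        rw [← Real.log_div (by positivity) (by positivity)]
        have h2 := Real.log_le_sub_one_of_pos (show (0:ℝ) < ((m:ℝ)+1)/m by positivity)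
        have : ((m:ℝ)+1)/m - 1 = 1/m := by field_simp; ring
        linarith
      have hm1 : (0:ℝ) < 1/m := by positivity
      have expand : ((m:ℝ)+1) * Real.log ((m:ℝ)+1) - ((m:ℝ)+1) + 1
          ≤ ((m:ℝ) * Real.log m - m + 1) + Real.log ((m:ℝ)+1) := by
        have : (m:ℝ) * (Real.log ((m:ℝ)+1) - Real.log m) ≤ (m:ℝ) * (1/m) := by
          exact mul_le_mul_of_nonneg_left key (le_of_lt hpos)
        have hmm : (m:ℝ) * (1/m) = 1 := by field_simp
        nlinarith
      push_cast
      push_cast at ihm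
      linarith

lemma sum_log_div_le (N : ℕ) (hN : 1 ≤ N) :
    ∑ i ∈ Ico 1 N, Real.log ((N:ℝ)/i) ≤ N := by
  rcases Nat.lt_or_ge N 2 with h2 | h2
  · interval_cases N; simp
  · have hterm : ∀ i ∈ Ico 1 N, Real.log ((N:ℝ)/i) = Real.log N - Real.log i := by
      intro i hi
      simp only [Finset.mem_Ico] at hi
      have hi1 : (0:ℝ) < i := by exact_mod_cast hi.1
      rw [Real.log_div (by positivity) (by positivity)]
    have hsplit : ∑ i ∈ Ico 1 N, Real.log ((N:ℝ)/i)
        = ((N:ℝ)-1) * Real.log N - ∑ i ∈ Ico 1 N, Real.log i := by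
      rw [Finset.sum_congr rfl hterm, Finset.sum_sub_distrib,
        Finset.sum_const, Nat.card_Ico, nsmul_eq_mul]
      push_cast [Nat.cast_sub (by omega : 1 ≤ N)]
      ring_nf
    have hstir := stirling_lb (N-1) (by omega)
    have hNeq : N - 1 + 1 = N := by omega
    rw [hNeq] at hstir
    have hcast : ((N-1 : ℕ) : ℝ) = (N:ℝ) - 1 := by
      push_cast [Nat.cast_sub (by omega : 1 ≤ N)]; ring
    rw [hcast] at hstir
    have hlogdiff : Real.log N - Real.log ((N:ℝ)-1) ≤ 1/((N:ℝ)-1) := by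
      have hpos : (0:ℝ) < (N:ℝ)-1 := by
        have : (2:ℝ) ≤ N := by exact_mod_cast h2
        linarith
      rw [← Real.log_div (by positivity) (by positivity)]
      have h3 := Real.log_le_sub_one_of_pos (show (0:ℝ) < (N:ℝ)/((N:ℝ)-1) by positivity)
      have : (N:ℝ)/((N:ℝ)-1) - 1 = 1/((N:ℝ)-1) := by field_simp; ring
      linarith
    have hpos : (0:ℝ) < (N:ℝ)-1 := by
      have : (2:ℝ) ≤ N := by exact_mod_cast h2
      linarith
    have : ((N:ℝ)-1) * (Real.log N - Real.log ((N:ℝ)-1)) ≤ ((N:ℝ)-1) * (1/((N:ℝ)-1)) :=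
      mul_le_mul_of_nonneg_left hlogdiff (le_of_lt hpos)
    have h4 : ((N:ℝ)-1) * (1/((N:ℝ)-1)) = 1 := by field_simp
    rw [hsplit]
    nlinarith

lemma sum_reflect (N : ℕ) (f : ℕ → ℝ) :
    ∑ i ∈ Ico 1 N, f (N - i) = ∑ i ∈ Ico 1 N, f i := by
  apply Finset.sum_nbij' (fun a => N - a) (fun a => N - a)
  all_goals intro a ha <;> simp at ha ⊢ <;> omega
section
variable {μ : ℝ}

lemma interior_term_le (hμ0 : 0 < μ) (N i : ℕ) (h1 : 1 ≤ i) (h2 : i < N) :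
    moranBoundaryStatH N μ i * moranBoundaryRowEntropy N μ i ≤
      moranBoundaryStatH N μ 0
        * (μ * (2 * Real.log ((N:ℝ)^2 / ((i:ℝ)*((N:ℝ)-i))) + 2)) := by
  have hs0 := s0_nonneg N hμ0 (μ := μ)
  have ha := a_pos h1 h2
  have hN : (0:ℝ) < (N:ℝ) := by exact_mod_cast (by omega : 0 < N)
  rw [moranBoundaryStatH, if_neg (by omega), moranBoundaryRowEntropy, if_neg (by omega),
    moranBoundaryStatH, if_pos (Or.inl rfl)]
  set s0 : ℝ := (2 + 2 * μ * (N : ℝ) * ∑ k ∈ Finset.Ico 1 N, (1 : ℝ) / (k : ℝ))⁻¹ with hs0def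
  set q : ℝ := (i:ℝ) * ((N:ℝ) - i) / (N:ℝ)^2 with hq
  have hq0 : 0 < q := div_pos ha (by positivity)
  have hq4 : q ≤ 1/4 := by
    rw [hq, div_le_div_iff₀ (by positivity) (by norm_num)]
    nlinarith [a_le h2]
  have hrw : (1 - 2 * (i:ℝ) * ((N:ℝ) - i) / (N:ℝ)^2) = 1 - 2*q := by rw [hq]; ring
  rw [hrw]
  have hqinv : q⁻¹ = (N:ℝ)^2 / ((i:ℝ)*((N:ℝ)-i)) := by
    rw [hq]; field_simp
  have hent := entropy_piece q hq0 hq4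
  rw [hqinv] at hent
  set L : ℝ := 2 * Real.log ((N:ℝ)^2 / ((i:ℝ)*((N:ℝ)-i))) + 2 with hL
  -- stat_i = s0 * (μ * N^2 / a); bound rowEnt by q * L
  have hc : 0 ≤ s0 * (μ * (N:ℝ)^2 / ((i:ℝ)*((N:ℝ)-i))) := by positivity
  have hNi : (N:ℝ) - i ≠ 0 := by
    have : (i:ℝ) < N := by exact_mod_cast h2
    linarith
  calc s0 * (μ * (N:ℝ)^2 / ((i:ℝ)*((N:ℝ)-i)))
        * -(2 * (q * Real.log q) + (1 - 2*q) * Real.log (1 - 2*q))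
      ≤ s0 * (μ * (N:ℝ)^2 / ((i:ℝ)*((N:ℝ)-i))) * (q * L) := mul_le_mul_of_nonneg_left hent hc
    _ = s0 * (μ * L) := by
        rw [hq]; field_simp

lemma sum_logs_le (N : ℕ) (h2 : 2 ≤ N) :
    ∑ i ∈ Finset.Ico 1 N, (2 * Real.log ((N:ℝ)^2 / ((i:ℝ)*((N:ℝ)-i))) + 2)
      ≤ 6 * N := by
  have hN : (0:ℝ) < (N:ℝ) := by exact_mod_cast (by omega : 0 < N)
  have hterm : ∀ i ∈ Finset.Ico 1 N,
      (2 * Real.log ((N:ℝ)^2 / ((i:ℝ)*((N:ℝ)-i))) + 2)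
      = 2 * Real.log ((N:ℝ)/i) + 2 * Real.log ((N:ℝ)/((N - i : ℕ))) + 2 := by
    intro i hi
    simp only [Finset.mem_Ico] at hi
    have hi1 : (0:ℝ) < i := by exact_mod_cast hi.1
    have hiN : (i:ℝ) < N := by exact_mod_cast hi.2
    have hcast : ((N - i : ℕ) : ℝ) = (N:ℝ) - i := by
      push_cast [Nat.cast_sub (le_of_lt hi.2)]; ring
    rw [hcast]
    have hfac : (N:ℝ)^2 / ((i:ℝ)*((N:ℝ)-i)) = ((N:ℝ)/i) * ((N:ℝ)/((N:ℝ)-i)) := by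
      field_simp
    have hd : (0:ℝ) < (N:ℝ)-i := by linarith
    rw [hfac, Real.log_mul (ne_of_gt (div_pos hN hi1)) (ne_of_gt (div_pos hN hd))]
    ring
  rw [Finset.sum_congr rfl hterm]
  have hsum1 : ∑ i ∈ Finset.Ico 1 N, Real.log ((N:ℝ)/i) ≤ N :=
    sum_log_div_le N (by omega)
  have hsum2 : ∑ i ∈ Finset.Ico 1 N, Real.log ((N:ℝ)/((N - i : ℕ)))
      = ∑ i ∈ Finset.Ico 1 N, Real.log ((N:ℝ)/i) :=
    sum_reflect N (fun j => Real.log ((N:ℝ)/j))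
  have hcard : (Finset.Ico 1 N).card = N - 1 := Nat.card_Ico 1 N
  have hexp : ∑ i ∈ Finset.Ico 1 N,
      (2 * Real.log ((N:ℝ)/i) + 2 * Real.log ((N:ℝ)/((N - i : ℕ))) + 2)
      = 2 * (∑ i ∈ Finset.Ico 1 N, Real.log ((N:ℝ)/i))
        + 2 * (∑ i ∈ Finset.Ico 1 N, Real.log ((N:ℝ)/((N - i : ℕ))))
        + 2 * ((N:ℝ) - 1) := by
    rw [Finset.sum_add_distrib, Finset.sum_add_distrib, ← Finset.mul_sum, ← Finset.mul_sum,
      Finset.sum_const, hcard, nsmul_eq_mul]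
    push_cast [Nat.cast_sub (by omega : 1 ≤ N)]
    ring
  rw [hexp, hsum2]
  linarith

end

theorem moranBoundary_entropyRate_tendsto_zero_N (μ : ℝ) (hμ : μ ∈ Set.Ioo (0 : ℝ) 1) :
    Filter.Tendsto
      (fun N : ℕ =>
        ∑ i ∈ range (N + 1), moranBoundaryStatH N μ i * moranBoundaryRowEntropy N μ i)
      Filter.atTop (nhds 0) := by
  obtain ⟨hμ0, hμ1⟩ := hμ
  have htop : Filter.Tendsto (fun N : ℕ => (2/μ + 3)/Real.log N) Filter.atTop (nhds 0) :=
    Filter.Tendsto.div_atTop tendsto_const_nhds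
      (Real.tendsto_log_atTop.comp tendsto_natCast_atTop_atTop)
  refine tendsto_of_tendsto_of_tendsto_of_le_of_le' tendsto_const_nhds htop ?_ ?_
  · filter_upwards with N
    refine Finset.sum_nonneg fun i hi => term_nonneg hμ0 hμ1 N i ?_
    simp only [Finset.mem_range] at hi; omega
  · rw [Filter.eventually_atTop]
    refine ⟨2, fun N hN => ?_⟩
    have h2N : (2:ℝ) ≤ (N:ℝ) := by exact_mod_cast hN
    have hN1 : (1:ℝ) < (N:ℝ) := by linarith
    have hNr : (0:ℝ) < (N:ℝ) := by linarith
    have hL : 0 < Real.log N := Real.log_pos hN1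
    set s0 := moranBoundaryStatH N μ 0 with hs0d
    have hs0 : 0 ≤ s0 := s0_nonneg N hμ0
    -- boundary entropy bound
    have hHb : -(μ * Real.log μ + (1 - μ) * Real.log (1 - μ)) ≤ 1 := by
      have h1 := neg_mul_log_le μ hμ0
      have h2 := neg_mul_log_le (1-μ) (by linarith)
      linarith
    have hf0 : moranBoundaryStatH N μ 0 * moranBoundaryRowEntropy N μ 0 ≤ s0 := by
      rw [moranBoundaryRowEntropy, if_pos (Or.inl rfl), ← hs0d]
      calc s0 * -(μ * Real.log μ + (1 - μ) * Real.log (1 - μ))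
          ≤ s0 * 1 := mul_le_mul_of_nonneg_left hHb hs0
        _ = s0 := mul_one s0
    have hstatN : moranBoundaryStatH N μ N = s0 := by
      rw [hs0d, moranBoundaryStatH, if_pos (Or.inr rfl), moranBoundaryStatH,
        if_pos (Or.inl rfl)]
    have hfN : moranBoundaryStatH N μ N * moranBoundaryRowEntropy N μ N ≤ s0 := by
      rw [hstatN, moranBoundaryRowEntropy, if_pos (Or.inr rfl)]
      calc s0 * -(μ * Real.log μ + (1 - μ) * Real.log (1 - μ))
          ≤ s0 * 1 := mul_le_mul_of_nonneg_left hHb hs0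
        _ = s0 := mul_one s0
    -- interior bound
    have hint : ∑ i ∈ Ico 1 N, moranBoundaryStatH N μ i * moranBoundaryRowEntropy N μ i
        ≤ s0 * (μ * (6 * N)) := by
      calc ∑ i ∈ Ico 1 N, moranBoundaryStatH N μ i * moranBoundaryRowEntropy N μ i
          ≤ ∑ i ∈ Ico 1 N,
              s0 * (μ * (2 * Real.log ((N:ℝ)^2 / ((i:ℝ)*((N:ℝ)-i))) + 2)) := by
            refine Finset.sum_le_sum fun i hi => ?_
            simp only [Finset.mem_Ico] at hi
            exact interior_term_le hμ0 N i hi.1 hi.2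
        _ = s0 * (μ * ∑ i ∈ Ico 1 N,
              (2 * Real.log ((N:ℝ)^2 / ((i:ℝ)*((N:ℝ)-i))) + 2)) := by
            rw [← Finset.mul_sum, ← Finset.mul_sum]
        _ ≤ s0 * (μ * (6 * N)) := by
            refine mul_le_mul_of_nonneg_left (mul_le_mul_of_nonneg_left ?_ hμ0.le) hs0
            exact sum_logs_le N hN
    -- s0 bound
    have hhar : Real.log N ≤ ∑ k ∈ Ico 1 N, (1:ℝ)/k := log_le_harmonic N (by omega)
    have hdpos : 0 < 2*μ*(N:ℝ)*Real.log N := by positivity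
    have hs0le : s0 ≤ (2*μ*(N:ℝ)*Real.log N)⁻¹ := by
      rw [hs0d, moranBoundaryStatH, if_pos (Or.inl rfl)]
      refine inv_anti₀ hdpos ?_
      have : 2*μ*(N:ℝ)*Real.log N ≤ 2*μ*(N:ℝ)*∑ k ∈ Ico 1 N, (1:ℝ)/k :=
        mul_le_mul_of_nonneg_left hhar (by positivity)
      linarith
    -- final arithmetic
    have hfinal : (2*μ*(N:ℝ)*Real.log N)⁻¹ * (2 + 6*μ*N) ≤ (2/μ + 3)/Real.log N := by
      rw [inv_mul_eq_div, div_le_div_iff₀ hdpos hL]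
      have hexpand : (2/μ + 3)*(2*μ*(N:ℝ)*Real.log N) = (4*(N:ℝ)+6*μ*N)*Real.log N := by
        field_simp; ring
      rw [hexpand]
      have hco : (2:ℝ) + 6*μ*N ≤ 4*(N:ℝ)+6*μ*N := by linarith
      exact mul_le_mul_of_nonneg_right hco hL.le
    -- decompose and combine
    rw [Finset.sum_range_succ, Finset.range_eq_Ico,
      Finset.sum_eq_sum_Ico_succ_bot (by omega : 0 < N)]
    have hsum : s0 + s0 * (μ * (6 * N)) + s0 = s0 * (2 + 6*μ*N) := by ring
    calc moranBoundaryStatH N μ 0 * moranBoundaryRowEntropy N μ 0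
          + ∑ i ∈ Ico 1 N, moranBoundaryStatH N μ i * moranBoundaryRowEntropy N μ i
          + moranBoundaryStatH N μ N * moranBoundaryRowEntropy N μ N
        ≤ s0 + s0 * (μ * (6 * N)) + s0 := by linarith
      _ = s0 * (2 + 6*μ*N) := hsum
      _ ≤ (2*μ*(N:ℝ)*Real.log N)⁻¹ * (2 + 6*μ*N) :=
          mul_le_mul_of_nonneg_right hs0le (by positivity)
      _ ≤ (2/μ + 3)/Real.log N := hfinal
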